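/- A polynomial p ∈ ℂ[x₀,x₁,x₂,x₃] satisfies σ_t p = p for all t ∈ ℂ if and only if p lies in the ℂ-subalgebra generated by the four polynomials x₀, x₀x₂ − x₁², x₁³ + (1/2)x₀²x₃ − (3/2)x₀x₁x₂, and 2x₀x₁x₂x₃ − (1/3)x₀²x₃² + x₁²x₂² − (4/3)x₁³x₃ − (4/3)x₀x₂³; that is, the subalgebra of σ-invariants equals the Algebra.adjoin of these four elements. -/

import Mathlib

open MvPolynomial

/-- The `ℂ`-algebra endomorphism of `ℂ[x₀,x₁,x₂,x₃]` given by `σ_t(x₀) = x₀`,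
`σ_t(x₁) = x₁ + t·x₀`, `σ_t(x₂) = x₂ + 2t·x₁ + t²·x₀`,
`σ_t(x₃) = x₃ + 3t·x₂ + 3t²·x₁ + t³·x₀` (the `ℂ⁺`-action on `Sym³(ℂ²)`). -/
noncomputable def sigma (t : ℂ) :
    MvPolynomial (Fin 4) ℂ →ₐ[ℂ] MvPolynomial (Fin 4) ℂ :=
  aeval ![X 0,
          X 1 + C t * X 0,
          X 2 + C (2 * t) * X 1 + C (t ^ 2) * X 0,
          X 3 + C (3 * t) * X 2 + C (3 * t ^ 2) * X 1 + C (t ^ 3) * X 0]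

abbrev R4 := MvPolynomial (Fin 4) ℂ
abbrev R3 := MvPolynomial (Fin 3) ℂ

lemma aeval_eq_eval' {n : ℕ} (x : Fin n → ℂ) (q : MvPolynomial (Fin n) ℂ) :
    aeval x q = eval x q := by
  rw [aeval_def, eval₂_eq_eval_map]; simp

lemma eval_aeval' {n m : ℕ} (x : Fin m → ℂ) (v : Fin n → MvPolynomial (Fin m) ℂ)
    (q : MvPolynomial (Fin n) ℂ) :
    eval x (aeval v q) = eval (fun i => eval x (v i)) q := by
  rw [← aeval_eq_eval' x, comp_aeval_apply, ← aeval_eq_eval']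
  simp only [aeval_eq_eval']

/-- density: equality of evaluations off `x 0 = 0` implies equality. -/
lemma eq_of_eval_eq_on_ne_zero {p q : R4}
    (h : ∀ x : Fin 4 → ℂ, x 0 ≠ 0 → eval x p = eval x q) : p = q := by
  have hX : (X 0 : R4) * p = X 0 * q := by
    apply MvPolynomial.funext
    intro x
    by_cases hx : x 0 = 0
    · simp [hx]
    · simp [h x hx]
  exact mul_left_cancel₀ (X_ne_zero (0 : Fin 4)) hX

noncomputable def Pg : R4 := X 0 * X 2 - X 1 ^ 2
noncomputable def Gg : R4 :=
  X 1 ^ 3 + C (1 / 2 : ℂ) * X 0 ^ 2 * X 3 - C (3 / 2 : ℂ) * X 0 * X 1 * X 2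
noncomputable def Dg : R4 :=
  C (2 : ℂ) * X 0 * X 1 * X 2 * X 3 - C (1 / 3 : ℂ) * X 0 ^ 2 * X 3 ^ 2
    + X 1 ^ 2 * X 2 ^ 2 - C (4 / 3 : ℂ) * X 1 ^ 3 * X 3
    - C (4 / 3 : ℂ) * X 0 * X 2 ^ 3

noncomputable def iota : R3 →ₐ[ℂ] R4 := aeval ![X 0, Pg, Gg]
noncomputable def Phi : R4 →ₐ[ℂ] R4 := aeval ![X 0, Pg, Gg, Dg]
noncomputable def jr : R3 →ₐ[ℂ] R4 := aeval ![X 0, X 1, X 2]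

/-- key relation: `iota (X2² + X1³) = -(3/4) X0² Dg`. -/
lemma relKey : iota (X 2 ^ 2 + X 1 ^ 3) = C (-3/4 : ℂ) * X 0 ^ 2 * Dg := by
  apply MvPolynomial.funext
  intro x
  rw [iota, eval_aeval']
  simp [Pg, Gg, Dg]
  ring

/-- generators are invariant -/
lemma sigma_X0 (t : ℂ) : sigma t (X 0) = X 0 := by
  apply MvPolynomial.funext; intro x
  rw [sigma, eval_aeval']; simp

lemma sigma_Pg (t : ℂ) : sigma t Pg = Pg := by
  apply MvPolynomial.funext; intro x
  rw [sigma, Pg, eval_aeval']; simp; ring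

lemma sigma_Gg (t : ℂ) : sigma t Gg = Gg := by
  apply MvPolynomial.funext; intro x
  rw [sigma, Gg, eval_aeval']; simp; ring

lemma sigma_Dg (t : ℂ) : sigma t Dg = Dg := by
  apply MvPolynomial.funext; intro x
  rw [sigma, Dg, eval_aeval']; simp; ring

/-- slice identity at points with `x 0 ≠ 0` -/
lemma eval_slice {p : R4} (hp : ∀ t, sigma t p = p) (x : Fin 4 → ℂ) (hx : x 0 ≠ 0) :
    eval x p = eval ![x 0, 0, (x 0 * x 2 - x 1 ^ 2) / x 0,
      2 * (x 1 ^ 3 + (1/2) * x 0 ^ 2 * x 3 - (3/2) * x 0 * x 1 * x 2) / x 0 ^ 2] p := by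
  have h := congrArg (eval x) (hp (-(x 1) / x 0))
  rw [sigma, eval_aeval'] at h
  have hv : (fun i => eval x
      (![X 0, X 1 + C (-x 1 / x 0) * X 0, X 2 + C (2 * (-x 1 / x 0)) * X 1 + C ((-x 1 / x 0) ^ 2) * X 0,
          X 3 + C (3 * (-x 1 / x 0)) * X 2 + C (3 * (-x 1 / x 0) ^ 2) * X 1 + C ((-x 1 / x 0) ^ 3) * X 0] i))
      = ![x 0, 0, (x 0 * x 2 - x 1 ^ 2) / x 0,
      2 * (x 1 ^ 3 + (1/2) * x 0 ^ 2 * x 3 - (3/2) * x 0 * x 1 * x 2) / x 0 ^ 2] := by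
    funext i
    fin_cases i <;> simp <;> field_simp <;> ring
  rw [← h, hv]

lemma term_eq (a P G c : ℂ) (ha : a ≠ 0) (m0 m1 m2 N : ℕ) (hle : m1 + 2*m2 ≤ N + m0) :
    a ^ N * (c * (a ^ m0 * (P / a) ^ m1 * (2 * G / a ^ 2) ^ m2)) =
      c * 2 ^ m2 * a ^ (N + m0 - (m1 + 2*m2)) * P ^ m1 * G ^ m2 := by
  rw [pow_sub₀ a ha hle]
  field_simp
  have h1 : a ^ m1 * a⁻¹ ^ m1 = 1 := by rw [← mul_pow, mul_inv_cancel₀ ha, one_pow]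
  have h2 : a ^ (m2 * 2) * a⁻¹ ^ (m2 * 2) = 1 := by rw [← mul_pow, mul_inv_cancel₀ ha, one_pow]
  calc _ = a ^ N * a ^ m0 * c * P ^ m1 * G ^ m2 * 2 ^ m2 *
        ((a ^ m1 * a⁻¹ ^ m1) * (a ^ (m2 * 2) * a⁻¹ ^ (m2 * 2))) := by ring
    _ = _ := by rw [h1, h2]; ring

lemma exists_pow_mul_eq_iota {p : R4} (hp : ∀ t, sigma t p = p) :
    ∃ (N : ℕ) (F : R3), X 0 ^ N * p = iota F := by
  let r : R3 := aeval ![X 0, 0, X 1, X 2] p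
  let N : ℕ := ∑ m ∈ r.support, (m 1 + 2 * m 2)
  have hN : ∀ m ∈ r.support, m 1 + 2 * m 2 ≤ N := fun m hm =>
    Finset.single_le_sum (f := fun m => m 1 + 2 * m 2) (fun _ _ => Nat.zero_le _) hm
  refine ⟨N, ∑ m ∈ r.support,
    C (coeff m r * 2 ^ (m 2)) * X 0 ^ (N + m 0 - (m 1 + 2 * m 2)) * X 1 ^ (m 1) * X 2 ^ (m 2), ?_⟩
  apply eq_of_eval_eq_on_ne_zero
  intro x hx
  have hL : eval x p = eval ![x 0, (x 0 * x 2 - x 1 ^ 2) / x 0,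
      2 * (x 1 ^ 3 + (1/2) * x 0 ^ 2 * x 3 - (3/2) * x 0 * x 1 * x 2) / (x 0) ^ 2] r := by
    have hw : (fun i => eval ![x 0, (x 0 * x 2 - x 1 ^ 2) / x 0,
        2 * (x 1 ^ 3 + (1/2) * x 0 ^ 2 * x 3 - (3/2) * x 0 * x 1 * x 2) / (x 0) ^ 2]
          ((![X 0, 0, X 1, X 2] : Fin 4 → R3) i))
        = ![x 0, 0, (x 0 * x 2 - x 1 ^ 2) / x 0,
            2 * (x 1 ^ 3 + (1/2) * x 0 ^ 2 * x 3 - (3/2) * x 0 * x 1 * x 2) / x 0 ^ 2] := by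
      funext i
      fin_cases i <;> simp
    rw [eval_slice hp x hx, show r = aeval ![X 0, 0, X 1, X 2] p from rfl, eval_aeval', hw]
  have hvec : (fun i => eval x (![X 0, Pg, Gg] i)) = ![x 0, x 0 * x 2 - x 1 ^ 2,
      x 1 ^ 3 + (1/2) * x 0 ^ 2 * x 3 - (3/2) * x 0 * x 1 * x 2] := by
    funext i
    fin_cases i <;> · simp [Pg, Gg]
  rw [iota, eval_aeval', hvec, map_sum, map_mul, map_pow, eval_X, hL, eval_eq', Finset.mul_sum]
  apply Finset.sum_congr rfl
  intro m hm
  have hle : m 1 + 2 * m 2 ≤ N + m 0 := le_trans (hN m hm) (Nat.le_add_right N (m 0))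
  have key := term_eq (x 0) (x 0 * x 2 - x 1 ^ 2)
    (x 1 ^ 3 + (1/2) * x 0 ^ 2 * x 3 - (3/2) * x 0 * x 1 * x 2) (coeff m r) hx
    (m 0) (m 1) (m 2) N hle
  simp only [map_mul, map_pow, eval_C, eval_X, Fin.prod_univ_three,
    Matrix.cons_val_zero, Matrix.cons_val_one, Matrix.head_cons,
    Matrix.cons_val_two, Matrix.tail_cons]
  linear_combination key

lemma eval_polyaeval (y : Fin 3 → ℂ) (A : Polynomial ℂ) :
    eval y (Polynomial.aeval (X 1 : R3) A) = Polynomial.eval (y 1) A := by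
  rw [← aeval_eq_eval', ← Polynomial.aeval_algHom_apply]
  simp [Polynomial.coe_aeval_eq_eval]

lemma div_decomp (F : R3) : ∃ (H G : R3) (A B : Polynomial ℂ),
    F = X 0 * H + (X 2 ^ 2 + X 1 ^ 3) * G
      + X 2 * (Polynomial.aeval (X 1 : R3) A) + Polynomial.aeval (X 1 : R3) B := by
  induction F using MvPolynomial.induction_on with
  | C a =>
    exact ⟨0, 0, 0, Polynomial.C a, by simp [Polynomial.aeval_C, algebraMap_eq]⟩
  | add p q hp hq =>
    obtain ⟨H1, G1, A1, B1, h1⟩ := hp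
    obtain ⟨H2, G2, A2, B2, h2⟩ := hq
    exact ⟨H1 + H2, G1 + G2, A1 + A2, B1 + B2, by rw [h1, h2]; simp [map_add]; ring⟩
  | mul_X p i hp =>
    obtain ⟨H, G, A, B, hd⟩ := hp
    fin_cases i
    · refine ⟨p, 0, 0, 0, by simp; ring⟩
    · refine ⟨H * X 1, G * X 1, A * Polynomial.X, B * Polynomial.X, ?_⟩
      rw [hd]; simp [map_mul]; ring
    · refine ⟨H * X 2, G * X 2 + Polynomial.aeval (X 1 : R3) A, B,
        -(Polynomial.C 1 * Polynomial.X ^ 3 * A), ?_⟩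
      rw [hd]; simp [map_mul, map_neg, map_pow]; ring

lemma poly_zero_of_roots_ne_zero {A : Polynomial ℂ} (h : ∀ u : ℂ, u ≠ 0 → A.eval u = 0) :
    A = 0 := by
  apply Polynomial.eq_zero_of_infinite_isRoot
  apply Set.Infinite.mono (s := ({0}ᶜ : Set ℂ))
  · exact fun u hu => h u hu
  · exact (Set.finite_singleton (0 : ℂ)).infinite_compl

lemma div3 {F : R3} (h : ∀ s : ℂ, s ≠ 0 → eval ![(0:ℂ), -s^2, s^3] F = 0) :
    ∃ H G : R3, F = X 0 * H + (X 2 ^ 2 + X 1 ^ 3) * G := by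
  obtain ⟨H, G, A, B, hd⟩ := div_decomp F
  have hev : ∀ s : ℂ, s ≠ 0 →
      s ^ 3 * Polynomial.eval (-s^2) A + Polynomial.eval (-s^2) B = 0 := by
    intro s hs
    have := h s hs
    rw [hd] at this
    simp only [map_add, map_mul, map_pow, eval_X, eval_polyaeval,
      Matrix.cons_val_zero, Matrix.cons_val_one, Matrix.head_cons,
      Matrix.cons_val_two, Matrix.tail_cons] at this
    -- this : 0 * _ + ((s^3)^2 + (-s^2)^3) * _ + s^3 * A(-s^2) + B(-s^2) = 0
    linear_combination this
  have hAB : ∀ s : ℂ, s ≠ 0 →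
      Polynomial.eval (-s^2) A = 0 ∧ Polynomial.eval (-s^2) B = 0 := by
    intro s hs
    have h1 := hev s hs
    have h2 := hev (-s) (neg_ne_zero.mpr hs)
    have e1 : (-s) ^ 2 = s ^ 2 := by ring
    have e2 : (-s) ^ 3 = -s ^ 3 := by ring
    rw [e1, e2] at h2
    constructor
    · have : (2 * s ^ 3) * Polynomial.eval (-s^2) A = 0 := by linear_combination h1 - h2
      have hs3 : (2 * s ^ 3 : ℂ) ≠ 0 := by
        simp [pow_ne_zero, hs]
      exact (mul_eq_zero.mp this).resolve_left hs3
    · have : (2 : ℂ) * Polynomial.eval (-s^2) B = 0 := by linear_combination h1 + h2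
      have h2ne : (2 : ℂ) ≠ 0 := two_ne_zero
      exact (mul_eq_zero.mp this).resolve_left h2ne
  have hA : A = 0 := by
    apply poly_zero_of_roots_ne_zero
    intro u hu
    obtain ⟨s, hsq⟩ := IsAlgClosed.exists_pow_nat_eq (-u) (n := 2) (by norm_num)
    have hs : s ≠ 0 := by
      intro h0
      rw [h0] at hsq
      simp at hsq
      exact hu hsq
    have : -s ^ 2 = u := by rw [hsq]; ring
    rw [← this]
    exact (hAB s hs).1
  have hB : B = 0 := by
    apply poly_zero_of_roots_ne_zero
    intro u hu
    obtain ⟨s, hsq⟩ := IsAlgClosed.exists_pow_nat_eq (-u) (n := 2) (by norm_num)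
    have hs : s ≠ 0 := by
      intro h0
      rw [h0] at hsq
      simp at hsq
      exact hu hsq
    have : -s ^ 2 = u := by rw [hsq]; ring
    rw [← this]
    exact (hAB s hs).2
  exact ⟨H, G, by rw [hd, hA, hB]; simp⟩

/-- Representation predicate: `p = ∑ g^k ψ (F k)`. -/
def RepW (g : R4) (ψ : R3 →ₐ[ℂ] R4) (p : R4) : Prop :=
  ∃ (K : ℕ) (F : ℕ → R3), p = ∑ k ∈ Finset.range K, g ^ k * ψ (F k)

lemma sum_ite_trunc (g : R4) (ψ : R3 →ₐ[ℂ] R4) {K K' : ℕ} (h : K ≤ K') (F : ℕ → R3) :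
    ∑ k ∈ Finset.range K', g ^ k * ψ (if k < K then F k else 0)
      = ∑ k ∈ Finset.range K, g ^ k * ψ (F k) := by
  rw [← Finset.sum_subset (Finset.range_subset_range.mpr h)]
  · apply Finset.sum_congr rfl
    intro k hk
    rw [if_pos (Finset.mem_range.mp hk)]
  · intro k _ hk
    rw [if_neg (by simpa using Finset.mem_range.not.mp hk)]
    simp

lemma RepW.add {g : R4} {ψ : R3 →ₐ[ℂ] R4} {p q : R4} (hp : RepW g ψ p) (hq : RepW g ψ q) :
    RepW g ψ (p + q) := by
  obtain ⟨K, F, hF⟩ := hp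
  obtain ⟨L, G, hG⟩ := hq
  refine ⟨max K L, fun k => (if k < K then F k else 0) + (if k < L then G k else 0), ?_⟩
  rw [hF, hG]
  rw [← sum_ite_trunc g ψ (le_max_left K L) F, ← sum_ite_trunc g ψ (le_max_right K L) G,
    ← Finset.sum_add_distrib]
  apply Finset.sum_congr rfl
  intro k _
  rw [map_add]
  ring

lemma RepW.psi_mul {g : R4} {ψ : R3 →ₐ[ℂ] R4} {p : R4} (F0 : R3) (hp : RepW g ψ p) :
    RepW g ψ (ψ F0 * p) := by
  obtain ⟨K, F, hF⟩ := hp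
  refine ⟨K, fun k => F0 * F k, ?_⟩
  rw [hF, Finset.mul_sum]
  apply Finset.sum_congr rfl
  intro k _
  rw [map_mul]
  ring

lemma RepW.g_mul {g : R4} {ψ : R3 →ₐ[ℂ] R4} {p : R4} (hp : RepW g ψ p) :
    RepW g ψ (g * p) := by
  obtain ⟨K, F, hF⟩ := hp
  refine ⟨K + 1, fun k => match k with | 0 => 0 | k + 1 => F k, ?_⟩
  rw [Finset.sum_range_succ']
  simp only [map_zero, pow_zero, one_mul, mul_zero, add_zero]
  rw [hF, Finset.mul_sum]
  apply Finset.sum_congr rfl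
  intro k _
  ring

lemma decompX3 (Fb : R4) : RepW (X 3) jr Fb := by
  induction Fb using MvPolynomial.induction_on with
  | C a =>
    refine ⟨1, fun _ => C a, ?_⟩
    simp [jr, algebraMap_eq]
  | add p q hp hq => exact hp.add hq
  | mul_X p i hp =>
    fin_cases i
    · show RepW (X 3) jr (p * X 0)
      rw [mul_comm]
      have e : (X 0 : R4) = jr (X 0) := by simp [jr]
      rw [e]; exact hp.psi_mul _
    · show RepW (X 3) jr (p * X 1)
      rw [mul_comm]
      have e : (X 1 : R4) = jr (X 1) := by simp [jr]
      rw [e]; exact hp.psi_mul _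
    · show RepW (X 3) jr (p * X 2)
      rw [mul_comm]
      have e : (X 2 : R4) = jr (X 2) := by simp [jr]
      rw [e]; exact hp.psi_mul _
    · show RepW (X 3) jr (p * X 3)
      rw [mul_comm]; exact hp.g_mul

lemma phi_jr (F : R3) : Phi (jr F) = iota F := by
  rw [jr, comp_aeval_apply]
  have hv : (fun i => Phi ((![X 0, X 1, X 2] : Fin 3 → R4) i)) = ![X 0, Pg, Gg] := by
    funext i
    fin_cases i <;> simp [Phi]
  rw [hv, iota]

lemma rep_of_mem_adjoin {p : R4}
    (hp : p ∈ Algebra.adjoin ℂ ({X 0, Pg, Gg, Dg} : Set R4)) : RepW Dg iota p := by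
  have hrange : p ∈ (Phi).range := by
    rw [Phi, ← Algebra.adjoin_range_eq_range_aeval]
    apply Algebra.adjoin_mono (s := ({X 0, Pg, Gg, Dg} : Set R4))
    · intro y hy
      simp only [Set.mem_insert_iff, Set.mem_singleton_iff] at hy
      rcases hy with h | h | h | h <;>
        · subst h
          simp [Matrix.range_cons, Matrix.range_empty]
    · exact hp
  obtain ⟨Fb, hFb⟩ := hrange
  have hFb' : Phi Fb = p := hFb
  obtain ⟨K, F, hK⟩ := decompX3 Fb
  refine ⟨K, F, ?_⟩
  rw [← hFb', hK, map_sum]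
  apply Finset.sum_congr rfl
  intro k _
  rw [map_mul, map_pow, phi_jr]
  have : Phi (X 3) = Dg := by rw [Phi]; simp
  rw [this]

lemma iota_mem_adjoin (F : R3) : iota F ∈ Algebra.adjoin ℂ ({X 0, Pg, Gg, Dg} : Set R4) := by
  have : iota F ∈ Algebra.adjoin ℂ (Set.range ![X 0, Pg, Gg]) := by
    rw [Algebra.adjoin_range_eq_range_aeval]
    exact ⟨F, rfl⟩
  apply Algebra.adjoin_mono (s := Set.range ![X 0, Pg, Gg]) ?_ this
  intro y hy
  simp only [Matrix.range_cons, Matrix.range_empty, Set.union_empty, Set.mem_union,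
    Set.mem_singleton_iff] at hy
  rcases hy with h | h | h <;> (subst h; simp)

lemma mem_adjoin_of_rep {p : R4} (h : RepW Dg iota p) :
    p ∈ Algebra.adjoin ℂ ({X 0, Pg, Gg, Dg} : Set R4) := by
  obtain ⟨K, F, hK⟩ := h
  rw [hK]
  apply Subalgebra.sum_mem
  intro k _
  apply Subalgebra.mul_mem
  · apply Subalgebra.pow_mem
    apply Algebra.subset_adjoin
    simp
  · exact iota_mem_adjoin (F k)

lemma main_ind : ∀ (N : ℕ) (q : R4), (∀ t, sigma t q = q) →
    RepW Dg iota (X 0 ^ N * q) → q ∈ Algebra.adjoin ℂ ({X 0, Pg, Gg, Dg} : Set R4) := by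
  intro N
  induction N with
  | zero =>
    intro q _ hrep
    rw [pow_zero, one_mul] at hrep
    exact mem_adjoin_of_rep hrep
  | succ N ih =>
    intro q hq hrep
    obtain ⟨K, F, hK⟩ := hrep
    have hvan : ∀ k, k < K → ∀ s : ℂ, s ≠ 0 → eval ![(0:ℂ), -s^2, s^3] (F k) = 0 := by
      intro k hk s hs
      have hz : ∀ z : ℂ, ∑ j ∈ Finset.range K,
          ((-(4/3) * s^3) ^ j * eval ![(0:ℂ), -s^2, s^3] (F j)) * z ^ j = 0 := by
        intro z
        have h0 := congrArg (eval ![(0:ℂ), s, 0, z]) hK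
        rw [map_mul, map_pow, eval_X] at h0
        simp only [Matrix.cons_val_zero] at h0
        rw [zero_pow (Nat.succ_ne_zero N), zero_mul, map_sum] at h0
        have hterm : ∀ j ∈ Finset.range K,
            eval ![(0:ℂ), s, 0, z] (Dg ^ j * iota (F j)) =
              ((-(4/3) * s^3) ^ j * eval ![(0:ℂ), -s^2, s^3] (F j)) * z ^ j := by
          intro j _
          have e1 : eval ![(0:ℂ), s, 0, z] Dg = -(4/3) * s^3 * z := by
            rw [Dg]; simp
          have e2 : eval ![(0:ℂ), s, 0, z] (iota (F j)) =
              eval ![(0:ℂ), -s^2, s^3] (F j) := by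
            rw [iota, eval_aeval']
            have hv : (fun i => eval ![(0:ℂ), s, 0, z] ((![X 0, Pg, Gg] : Fin 3 → R4) i))
                = ![(0:ℂ), -s^2, s^3] := by
              funext i
              fin_cases i <;> simp [Pg, Gg] <;> ring
            rw [hv]
          rw [map_mul, map_pow, e1, e2]
          ring
        rw [Finset.sum_congr rfl hterm] at h0
        exact h0.symm
      set c : ℕ → ℂ := fun j => eval ![(0:ℂ), -s^2, s^3] (F j) with hc
      set Pz : Polynomial ℂ :=
        ∑ j ∈ Finset.range K, Polynomial.C ((-(4/3) * s^3) ^ j * c j) * Polynomial.X ^ j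
        with hPzdef
      have hPz : Pz = 0 := by
        apply Polynomial.funext
        intro z
        rw [hPzdef, Polynomial.eval_finset_sum]
        simp only [Polynomial.eval_mul, Polynomial.eval_C, Polynomial.eval_pow,
          Polynomial.eval_X, Polynomial.eval_zero]
        exact hz z
      have hcoeff : Pz.coeff k = (-(4/3) * s^3) ^ k * c k := by
        rw [hPzdef]
        simp only [Polynomial.C_mul_X_pow_eq_monomial, Polynomial.finset_sum_coeff,
          Polynomial.coeff_monomial]
        rw [Finset.sum_ite_eq' (Finset.range K) k]
        simp [Finset.mem_range.mpr hk]
      rw [hPz] at hcoeff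
      simp only [Polynomial.coeff_zero] at hcoeff
      have hne : ((-(4/3) * s^3 : ℂ)) ^ k ≠ 0 := by
        apply pow_ne_zero
        simp [hs]
      have := (mul_eq_zero.mp hcoeff.symm).resolve_left hne
      rw [hc] at this
      exact this
    -- divide each F k
    have hres : ∀ k : ℕ, ∃ HG : R3 × R3,
        (k < K → F k = X 0 * HG.1 + (X 2 ^ 2 + X 1 ^ 3) * HG.2) := by
      intro k
      by_cases hk : k < K
      · obtain ⟨H, G, hHG⟩ := div3 (hvan k hk)
        exact ⟨(H, G), fun _ => hHG⟩
      · exact ⟨(0, 0), fun h => absurd h hk⟩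
    choose HG hHG using hres
    have hT : X 0 ^ (N + 1) * q = X 0 *
        ((∑ k ∈ Finset.range K, Dg ^ k * iota ((HG k).1)) +
          Dg * ∑ k ∈ Finset.range K, Dg ^ k * iota (C (-3/4 : ℂ) * X 0 * (HG k).2)) := by
      rw [hK, mul_add, Finset.mul_sum, Finset.mul_sum, Finset.mul_sum,
        ← Finset.sum_add_distrib]
      apply Finset.sum_congr rfl
      intro k hk
      rw [hHG k (Finset.mem_range.mp hk)]
      have hiX0 : iota (X 0) = X 0 := by rw [iota]; simp
      have hiC : iota (C (-3/4 : ℂ)) = C (-3/4 : ℂ) := by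
        rw [iota]; simp [algebraMap_eq]
      rw [map_add, map_mul, map_mul, relKey, map_mul, map_mul, hiX0, hiC]
      ring
    have hcancel : X 0 ^ N * q =
        (∑ k ∈ Finset.range K, Dg ^ k * iota ((HG k).1)) +
          Dg * ∑ k ∈ Finset.range K, Dg ^ k * iota (C (-3/4 : ℂ) * X 0 * (HG k).2) := by
      apply mul_left_cancel₀ (X_ne_zero (0 : Fin 4))
      rw [← hT]
      ring
    apply ih q hq
    rw [hcancel]
    exact RepW.add ⟨K, fun k => (HG k).1, rfl⟩
      (RepW.g_mul ⟨K, fun k => C (-3/4 : ℂ) * X 0 * (HG k).2, rfl⟩)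

/-- A polynomial `p ∈ ℂ[x₀,x₁,x₂,x₃]` is `σ`-invariant if and only if it lies in the
`ℂ`-subalgebra generated by `x₀`, `x₀x₂ − x₁²`, `x₁³ + (1/2)x₀²x₃ − (3/2)x₀x₁x₂` and
`2x₀x₁x₂x₃ − (1/3)x₀²x₃² + x₁²x₂² − (4/3)x₁³x₃ − (4/3)x₀x₂³`. -/
theorem invariant_iff_mem_adjoin (p : MvPolynomial (Fin 4) ℂ) :
    (∀ t : ℂ, sigma t p = p) ↔
      p ∈ Algebra.adjoin ℂ
        ({X 0,
          X 0 * X 2 - X 1 ^ 2,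
          X 1 ^ 3 + C (1 / 2 : ℂ) * X 0 ^ 2 * X 3 - C (3 / 2 : ℂ) * X 0 * X 1 * X 2,
          C (2 : ℂ) * X 0 * X 1 * X 2 * X 3 - C (1 / 3 : ℂ) * X 0 ^ 2 * X 3 ^ 2
            + X 1 ^ 2 * X 2 ^ 2 - C (4 / 3 : ℂ) * X 1 ^ 3 * X 3
            - C (4 / 3 : ℂ) * X 0 * X 2 ^ 3} : Set (MvPolynomial (Fin 4) ℂ)) := by
  have hset : ({X 0,
          X 0 * X 2 - X 1 ^ 2,
          X 1 ^ 3 + C (1 / 2 : ℂ) * X 0 ^ 2 * X 3 - C (3 / 2 : ℂ) * X 0 * X 1 * X 2,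
          C (2 : ℂ) * X 0 * X 1 * X 2 * X 3 - C (1 / 3 : ℂ) * X 0 ^ 2 * X 3 ^ 2
            + X 1 ^ 2 * X 2 ^ 2 - C (4 / 3 : ℂ) * X 1 ^ 3 * X 3
            - C (4 / 3 : ℂ) * X 0 * X 2 ^ 3} : Set (MvPolynomial (Fin 4) ℂ))
      = ({X 0, Pg, Gg, Dg} : Set R4) := by
    rw [Pg, Gg, Dg]
  rw [hset]
  constructor
  · intro hp
    obtain ⟨N, F0, hNF⟩ := exists_pow_mul_eq_iota hp
    exact main_ind N p hp ⟨1, fun _ => F0, by rw [Finset.sum_range_one, pow_zero, one_mul, hNF]⟩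
  · intro hp t
    have hinv : ∀ q ∈ ({X 0, Pg, Gg, Dg} : Set R4), ∀ t : ℂ, sigma t q = q := by
      intro q hqs t
      simp only [Set.mem_insert_iff, Set.mem_singleton_iff] at hqs
      rcases hqs with h | h | h | h <;> subst h
      exacts [sigma_X0 t, sigma_Pg t, sigma_Gg t, sigma_Dg t]
    -- invariants form a subalgebra
    let Inv : Subalgebra ℂ R4 :=
      { carrier := {q | ∀ t : ℂ, sigma t q = q}
        mul_mem' := fun ha hb t => by rw [map_mul, ha t, hb t]
        add_mem' := fun ha hb t => by rw [map_add, ha t, hb t]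
        algebraMap_mem' := fun c t => by simp }
    have hmem : p ∈ Inv := by
      apply Algebra.adjoin_le ?_ hp
      intro q hq
      show ∀ t : ℂ, sigma t q = q
      exact hinv q hq
    exact hmem t
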